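/- Let φ₂ = T₂ - (1/3)T₁² and φ₃ = T₃ - T₂T₁ + (2/9)T₁³, where T_j = ξ₁^j + ξ₂^j + ξ₃^j are power sums in three variables. Then L(φ₂) = 0 and L(φ₃) = 0, where L = ∂/∂ξ₁ + ∂/∂ξ₂ + ∂/∂ξ₃; moreover the dimension of the kernel of L on homogeneous symmetric polynomials of degree k equals the number of nonnegative integer solutions (a,b) of 2a+3b = k, with basis given by the monomials φ₂^a φ₃^b. -/

import Mathlib

noncomputable section

open MvPolynomial

/-- The `j`-th power sum `T_j = ξ₁^j + ξ₂^j + ξ₃^j` in three variables. -/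
def pw (j : ℕ) : MvPolynomial (Fin 3) ℂ := (X 0) ^ j + (X 1) ^ j + (X 2) ^ j

/-- `φ₂ = T₂ - (1/3)T₁²`. -/
def φ2 : MvPolynomial (Fin 3) ℂ := pw 2 - C (1 / 3 : ℂ) * (pw 1) ^ 2

/-- `φ₃ = T₃ - T₂T₁ + (2/9)T₁³`. -/
def φ3 : MvPolynomial (Fin 3) ℂ := pw 3 - pw 2 * pw 1 + C (2 / 9 : ℂ) * (pw 1) ^ 3

/-- The operator `L = ∂/∂ξ₁ + ∂/∂ξ₂ + ∂/∂ξ₃`. -/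
def Lop (p : MvPolynomial (Fin 3) ℂ) : MvPolynomial (Fin 3) ℂ :=
  pderiv 0 p + pderiv 1 p + pderiv 2 p

lemma Lop_phi2 : Lop φ2 = 0 := by
  have C3 : (C (3⁻¹ : ℂ) : MvPolynomial (Fin 3) ℂ) * 3 = 1 := by
    rw [(map_ofNat (C : ℂ →+* MvPolynomial (Fin 3) ℂ) 3).symm, ← map_mul]; norm_num
  simp only [Lop, φ2, pw, map_sub, map_add, map_mul, pderiv_pow, pderiv_C, pderiv_X, one_div]
  simp [Pi.single_apply]
  linear_combination (-2*(X 0 + X 1 + X 2 : MvPolynomial (Fin 3) ℂ)) * C3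

lemma Lop_phi3 : Lop φ3 = 0 := by
  have C9 : (C (2/9 : ℂ) : MvPolynomial (Fin 3) ℂ) * 9 = 2 := by
    rw [(map_ofNat (C : ℂ →+* MvPolynomial (Fin 3) ℂ) 9).symm,
      (map_ofNat (C : ℂ →+* MvPolynomial (Fin 3) ℂ) 2).symm, ← map_mul]; norm_num
  simp only [Lop, φ3, pw, map_sub, map_add, map_mul, pderiv_pow, pderiv_C, pderiv_X]
  simp [Pi.single_apply]
  linear_combination (2*(X 0 * X 1 + X 0 * X 2 + X 1 * X 2 : MvPolynomial (Fin 3) ℂ)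
    + (X 0^2 + X 1^2 + X 2^2 : MvPolynomial (Fin 3) ℂ)) * C9

lemma es1 : esymm (Fin 3) ℂ 1 = X 0 + X 1 + X 2 := by
  rw [esymm_one]; simp [Fin.sum_univ_three]

lemma es2 : esymm (Fin 3) ℂ 2 = X 0 * X 1 + X 0 * X 2 + X 1 * X 2 := by
  have h : Finset.powersetCard 2 (Finset.univ : Finset (Fin 3)) =
      {({0,1} : Finset (Fin 3)), {0,2}, {1,2}} := by decide
  rw [esymm, h]
  rw [Finset.sum_insert (by decide), Finset.sum_insert (by decide), Finset.sum_singleton]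
  rw [show ({0,1} : Finset (Fin 3)) = insert 0 {1} from rfl,
      show ({0,2} : Finset (Fin 3)) = insert 0 {2} from rfl,
      show ({1,2} : Finset (Fin 3)) = insert 1 {2} from rfl]
  rw [Finset.prod_insert (by decide), Finset.prod_insert (by decide),
      Finset.prod_insert (by decide), Finset.prod_singleton, Finset.prod_singleton]
  ring

lemma es3 : esymm (Fin 3) ℂ 3 = X 0 * X 1 * X 2 := by
  have h : Finset.powersetCard 3 (Finset.univ : Finset (Fin 3)) = {Finset.univ} := by decide
  rw [esymm, h, Finset.sum_singleton, Fin.prod_univ_three]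

lemma Lop_add (p q : MvPolynomial (Fin 3) ℂ) : Lop (p + q) = Lop p + Lop q := by
  simp only [Lop, map_add]; ring

lemma Lop_mul (p q : MvPolynomial (Fin 3) ℂ) : Lop (p * q) = Lop p * q + p * Lop q := by
  simp only [Lop, pderiv_mul]; ring

lemma Lop_C (a : ℂ) : Lop (C a) = 0 := by simp [Lop]

lemma Lop_pow_zero (p : MvPolynomial (Fin 3) ℂ) (hp : Lop p = 0) (n : ℕ) : Lop (p ^ n) = 0 := by
  induction n with
  | zero => simpa using Lop_C 1
  | succ n ih => rw [pow_succ, Lop_mul, ih, hp]; ring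

lemma Lop_pw1 : Lop (pw 1) = 3 := by
  simp only [Lop, pw, pow_one, map_add,
    pderiv_X_self, pderiv_X_of_ne (show (0:Fin 3) ≠ 1 by decide),
    pderiv_X_of_ne (show (0:Fin 3) ≠ 2 by decide),
    pderiv_X_of_ne (show (1:Fin 3) ≠ 0 by decide),
    pderiv_X_of_ne (show (1:Fin 3) ≠ 2 by decide),
    pderiv_X_of_ne (show (2:Fin 3) ≠ 0 by decide),
    pderiv_X_of_ne (show (2:Fin 3) ≠ 1 by decide)]
  ring

lemma pw_symm (j : ℕ) : (pw j).IsSymmetric := by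
  have : pw j = psum (Fin 3) ℂ j := by
    rw [psum, Fin.sum_univ_three, pw]
  rw [this]; exact psum_isSymmetric _ _ _

lemma phi2_symm : φ2.IsSymmetric := by
  intro e
  simp only [φ2, map_sub, map_mul, map_pow, rename_C, (pw_symm 1) e, (pw_symm 2) e]

lemma phi3_symm : φ3.IsSymmetric := by
  intro e
  simp only [φ3, map_add, map_sub, map_mul, map_pow, rename_C,
    (pw_symm 1) e, (pw_symm 2) e, (pw_symm 3) e]

lemma pw_hom (j : ℕ) : (pw j).IsHomogeneous j :=
  ((isHomogeneous_X_pow _ _).add (isHomogeneous_X_pow _ _)).add (isHomogeneous_X_pow _ _)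

lemma phi2_hom : φ2.IsHomogeneous 2 := by
  refine (pw_hom 2).sub ?_
  simpa using (isHomogeneous_C (Fin 3) ((1:ℂ)/3)).mul ((pw_hom 1).pow 2)

lemma phi3_hom : φ3.IsHomogeneous 3 := by
  refine ((pw_hom 3).sub (by simpa using (pw_hom 2).mul (pw_hom 1))).add ?_
  simpa using (isHomogeneous_C (Fin 3) ((2:ℂ)/9)).mul ((pw_hom 1).pow 3)

lemma prod_hom (a b : ℕ) : (φ2 ^ a * φ3 ^ b).IsHomogeneous (2 * a + 3 * b) :=
  (phi2_hom.pow a).mul (phi3_hom.pow b)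

lemma sym_pow (p : MvPolynomial (Fin 3) ℂ) (hp : p.IsSymmetric) (n : ℕ) : (p ^ n).IsSymmetric := by
  induction n with
  | zero => simpa using MvPolynomial.IsSymmetric.one
  | succ n ih => rw [pow_succ]; exact ih.mul hp

lemma prod_symm (a b : ℕ) : (φ2 ^ a * φ3 ^ b).IsSymmetric :=
  (sym_pow _ phi2_symm a).mul (sym_pow _ phi3_symm b)

lemma prod_Lop (a b : ℕ) : Lop (φ2 ^ a * φ3 ^ b) = 0 := by
  rw [Lop_mul, Lop_pow_zero _ Lop_phi2, Lop_pow_zero _ Lop_phi3]; ring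

def esv : Fin 3 → MvPolynomial (Fin 3) ℂ := fun i => esymm (Fin 3) ℂ (i + 1)
def gvec : Fin 3 → MvPolynomial (Fin 3) ℂ := ![pw 1, φ2, φ3]
def gAlg : MvPolynomial (Fin 3) ℂ →ₐ[ℂ] MvPolynomial (Fin 3) ℂ := aeval gvec
def tv : Fin 3 → MvPolynomial (Fin 3) ℂ :=
  ![X 0, C (2/3 : ℂ) * X 0 ^ 2 - 2 * X 1, C (2/9 : ℂ) * X 0 ^ 3 - X 0 * X 1 + 3 * X 2]
def sv : Fin 3 → MvPolynomial (Fin 3) ℂ :=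
  ![X 0, C (1/3 : ℂ) * X 0 ^ 2 - C (1/2 : ℂ) * X 1,
    C (1/27 : ℂ) * X 0 ^ 3 - C (1/6 : ℂ) * X 0 * X 1 + C (1/3 : ℂ) * X 2]

lemma hst : (aeval sv).comp (aeval tv) = AlgHom.id ℂ (MvPolynomial (Fin 3) ℂ) := by
  apply MvPolynomial.algHom_ext
  intro i
  match i with
  | 0 =>
    simp only [AlgHom.comp_apply, aeval_X, AlgHom.id_apply, tv, sv, Matrix.cons_val_zero]
  | 1 =>
    simp only [AlgHom.comp_apply, aeval_X, AlgHom.id_apply, tv, sv, Matrix.cons_val_zero,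
      Matrix.cons_val_one, Matrix.head_cons, map_sub, map_add, map_mul, map_pow, map_ofNat,
      aeval_C, algebraMap_eq]
    apply MvPolynomial.funext; intro x
    simp; ring
  | 2 =>
    simp only [AlgHom.comp_apply, aeval_X, AlgHom.id_apply, tv, sv, Matrix.cons_val_zero,
      Matrix.cons_val_one, Matrix.head_cons, Matrix.cons_val_two, Matrix.tail_cons,
      map_sub, map_add, map_mul, map_pow, map_ofNat, aeval_C, algebraMap_eq]
    apply MvPolynomial.funext; intro x
    simp; ring

lemma hts : (aeval tv).comp (aeval sv) = AlgHom.id ℂ (MvPolynomial (Fin 3) ℂ) := by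
  apply MvPolynomial.algHom_ext
  intro i
  match i with
  | 0 =>
    simp only [AlgHom.comp_apply, aeval_X, AlgHom.id_apply, tv, sv, Matrix.cons_val_zero]
  | 1 =>
    simp only [AlgHom.comp_apply, aeval_X, AlgHom.id_apply, tv, sv, Matrix.cons_val_zero,
      Matrix.cons_val_one, Matrix.head_cons, map_sub, map_add, map_mul, map_pow, map_ofNat,
      aeval_C, algebraMap_eq]
    apply MvPolynomial.funext; intro x
    simp; ring
  | 2 =>
    simp only [AlgHom.comp_apply, aeval_X, AlgHom.id_apply, tv, sv, Matrix.cons_val_zero,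
      Matrix.cons_val_one, Matrix.head_cons, Matrix.cons_val_two, Matrix.tail_cons,
      map_sub, map_add, map_mul, map_pow, map_ofNat, aeval_C, algebraMap_eq]
    apply MvPolynomial.funext; intro x
    simp; ring

lemma heg : (aeval esv).comp (aeval tv) = aeval gvec := by
  apply MvPolynomial.algHom_ext
  intro i
  match i with
  | 0 =>
    simp only [AlgHom.comp_apply, aeval_X, tv, gvec, Matrix.cons_val_zero]
    simp only [esv, aeval_X]
    norm_num [es1, pw, Fin.sum_univ_three]
  | 1 =>
    simp only [AlgHom.comp_apply, aeval_X, tv, gvec, Matrix.cons_val_zero, Matrix.cons_val_one,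
      Matrix.head_cons, map_sub, map_add, map_mul, map_pow, map_ofNat, aeval_C, algebraMap_eq]
    simp only [esv, aeval_X]
    norm_num [es1, es2, φ2, pw, Fin.sum_univ_three]
    apply MvPolynomial.funext; intro x
    simp [Fin.sum_univ_three]; ring
  | 2 =>
    simp only [AlgHom.comp_apply, aeval_X, tv, gvec, Matrix.cons_val_zero, Matrix.cons_val_one,
      Matrix.head_cons, Matrix.cons_val_two, Matrix.tail_cons,
      map_sub, map_add, map_mul, map_pow, map_ofNat, aeval_C, algebraMap_eq]
    simp only [esv, aeval_X]
    norm_num [es1, es2, es3, φ3, pw, Fin.sum_univ_three]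
    apply MvPolynomial.funext; intro x
    simp [Fin.sum_univ_three]; ring

lemma esv_inj :
    Function.Injective (aeval esv : MvPolynomial (Fin 3) ℂ →ₐ[ℂ] MvPolynomial (Fin 3) ℂ) := by
  have h : ∀ p, (aeval esv) p = ((esymmAlgHom (Fin 3) ℂ 3) p).val := by
    intro p; rw [esymmAlgHom_apply]; rfl
  intro p q hpq
  rw [h, h] at hpq
  exact esymmAlgHom_fin_injective ℂ (le_refl 3) (Subtype.ext hpq)

lemma g_inj : Function.Injective gAlg := by
  unfold gAlg
  rw [← heg]
  intro p q hpq
  have h1 : Function.Injective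
      (aeval tv : MvPolynomial (Fin 3) ℂ →ₐ[ℂ] MvPolynomial (Fin 3) ℂ) := by
    intro p q h
    have h2 := congrArg (aeval sv) h
    have e : ∀ r, (aeval sv) ((aeval tv) r) = r := fun r => DFunLike.congr_fun hst r
    rwa [e, e] at h2
  exact h1 (esv_inj hpq)

lemma g_surj (p : MvPolynomial (Fin 3) ℂ) (hp : p.IsSymmetric) : ∃ F, gAlg F = p := by
  obtain ⟨q, hq⟩ := (esymmAlgHom_fin_bijective ℂ 3).2 ⟨p, hp⟩
  refine ⟨aeval sv q, ?_⟩
  have h1 : gAlg (aeval sv q) = (aeval esv) ((aeval tv) ((aeval sv) q)) := by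
    unfold gAlg
    rw [← heg]; rfl
  rw [h1, show (aeval tv) ((aeval sv) q) = q from DFunLike.congr_fun hts q]
  have h2 : (aeval esv) q = ((esymmAlgHom (Fin 3) ℂ 3) q).val := by
    rw [esymmAlgHom_apply]; rfl
  rw [h2, hq]

lemma Lop_aeval_g (F : MvPolynomial (Fin 3) ℂ) :
    Lop (gAlg F) = 3 * gAlg (pderiv 0 F) := by
  unfold gAlg
  induction F using MvPolynomial.induction_on with
  | C a => simp [aeval_C, algebraMap_eq, Lop_C]
  | add p q hp hq => rw [map_add, Lop_add, hp, hq, map_add, map_add]; ring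
  | mul_X p i hp =>
    rw [map_mul, aeval_X, Lop_mul, hp, pderiv_mul, map_add, map_mul, map_mul, aeval_X]
    match i with
    | 0 =>
      rw [pderiv_X_self, map_one]
      simp only [gvec, Matrix.cons_val_zero]
      rw [Lop_pw1]; ring
    | 1 =>
      rw [pderiv_X_of_ne (show (1:Fin 3) ≠ 0 by decide), map_zero]
      simp only [gvec, Matrix.cons_val_one, Matrix.head_cons, Matrix.cons_val_zero]
      rw [Lop_phi2]; ring
    | 2 =>
      rw [pderiv_X_of_ne (show (2:Fin 3) ≠ 0 by decide), map_zero]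
      simp only [gvec, Matrix.cons_val_two, Matrix.tail_cons, Matrix.head_cons]
      rw [Lop_phi3]; ring

lemma coeff_pderiv (i : Fin 3) (F : MvPolynomial (Fin 3) ℂ) (m : Fin 3 →₀ ℕ) :
    coeff m (pderiv i F) = ((m i + 1 : ℕ) : ℂ) * coeff (m + Finsupp.single i 1) F := by
  induction F using MvPolynomial.induction_on' with
  | add p q hp hq => rw [map_add, coeff_add, hp, hq, coeff_add]; ring
  | monomial u a =>
    rw [pderiv_monomial, coeff_monomial, coeff_monomial]
    by_cases h : u = m + Finsupp.single i 1
    · subst h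
      rw [if_pos (add_tsub_cancel_right _ _), if_pos rfl]
      simp [Finsupp.add_apply, Finsupp.single_eq_same, mul_comm]
    · rw [if_neg h]
      split_ifs with h'
      · by_cases hui : u i = 0
        · simp [hui]
        · exfalso
          apply h
          have hle : Finsupp.single i 1 ≤ u := by
            rw [Finsupp.single_le_iff]
            omega
          rw [← h', tsub_add_cancel_of_le hle]
      · simp

lemma no_x0 (F : MvPolynomial (Fin 3) ℂ) (hF : pderiv (0 : Fin 3) F = 0) (m : Fin 3 →₀ ℕ)
    (hm : m ∈ F.support) : m 0 = 0 := by
  by_contra h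
  have h1 : m = (m - Finsupp.single (0 : Fin 3) 1) + Finsupp.single (0 : Fin 3) 1 := by
    rw [tsub_add_cancel_of_le]
    rw [Finsupp.single_le_iff]; omega
  have h2 := coeff_pderiv (0 : Fin 3) F (m - Finsupp.single (0 : Fin 3) 1)
  rw [hF, coeff_zero, ← h1] at h2
  have h3 : coeff m F ≠ 0 := mem_support_iff.mp hm
  rcases mul_eq_zero.mp h2.symm with h | h
  · rw [Nat.cast_eq_zero] at h
    omega
  · exact h3 h

lemma mem_span_all (F : MvPolynomial (Fin 3) ℂ) (hF : pderiv (0 : Fin 3) F = 0) :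
    gAlg F ∈ Submodule.span ℂ (Set.range fun ab : ℕ × ℕ => φ2 ^ ab.1 * φ3 ^ ab.2) := by
  unfold gAlg
  rw [F.as_sum, map_sum]
  apply Submodule.sum_mem
  intro m hm
  rw [aeval_monomial]
  have h0 : m 0 = 0 := no_x0 F hF m hm
  have hprod : (m.prod fun i k => gvec i ^ k) = φ2 ^ (m 1) * φ3 ^ (m 2) := by
    rw [Finsupp.prod_fintype _ _ (fun i => pow_zero _), Fin.prod_univ_three]
    simp [gvec, h0]
  rw [hprod, ← Algebra.smul_def]
  exact Submodule.smul_mem _ _ (Submodule.subset_span ⟨(m 1, m 2), rfl⟩)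

lemma mem_span_k (k : ℕ) (p : MvPolynomial (Fin 3) ℂ) (hsym : p.IsSymmetric)
    (hhom : p.IsHomogeneous k) (hL : Lop p = 0) :
    p ∈ Submodule.span ℂ
      (Set.range fun q : {q : ℕ × ℕ // 2 * q.1 + 3 * q.2 = k} => φ2 ^ q.1.1 * φ3 ^ q.1.2) := by
  obtain ⟨F, hF⟩ := g_surj p hsym
  have h3 : (3 : MvPolynomial (Fin 3) ℂ) ≠ 0 := by
    intro h
    have h' := congrArg constantCoeff h
    rw [map_ofNat, map_zero] at h'
    norm_num at h'
  have hd0 : pderiv (0 : Fin 3) F = 0 := by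
    apply g_inj
    rw [map_zero]
    have h5 := Lop_aeval_g F
    rw [hF, hL] at h5
    rcases mul_eq_zero.mp h5.symm with h | h
    · exact absurd h h3
    · exact h
  have hall := mem_span_all F hd0
  rw [hF] at hall
  have hp : p = homogeneousComponent k p := by
    rw [homogeneousComponent_of_mem ((mem_homogeneousSubmodule _ _).mpr hhom), if_pos rfl]
  rw [hp]
  have hmem : homogeneousComponent k p ∈ Submodule.map (homogeneousComponent k)
      (Submodule.span ℂ (Set.range fun ab : ℕ × ℕ => φ2 ^ ab.1 * φ3 ^ ab.2)) :=
    Submodule.mem_map_of_mem hall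
  rw [Submodule.map_span] at hmem
  refine Submodule.span_le.mpr ?_ hmem
  rintro x ⟨y, ⟨ab, rfl⟩, rfl⟩
  rw [homogeneousComponent_of_mem
    ((mem_homogeneousSubmodule _ _).mpr (prod_hom ab.1 ab.2))]
  split_ifs with hk
  · exact Submodule.subset_span ⟨⟨ab, hk.symm⟩, rfl⟩
  · exact Submodule.zero_mem _

lemma li_poly {ι : Type*} (f : ι → Polynomial ℂ) (h0 : ∀ i, f i ≠ 0)
    (hd : Function.Injective fun i => (f i).natDegree) : LinearIndependent ℂ f := by
  classical
  rw [linearIndependent_iff']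
  intro s
  induction s using Finset.strongInduction with
  | _ s ih =>
    intro c hsum i hi
    rcases Finset.exists_max_image s (fun i => (f i).natDegree) ⟨i, hi⟩ with ⟨i0, hi0, hmax⟩
    have hc0 : c i0 = 0 := by
      have hcoeff := congrArg (fun p => Polynomial.coeff p ((f i0).natDegree)) hsum
      simp only [Polynomial.finset_sum_coeff, Polynomial.coeff_smul, Polynomial.coeff_zero,
        smul_eq_mul] at hcoeff
      rw [Finset.sum_eq_single i0 (fun j hj hne => ?_) (fun h => absurd hi0 h)] at hcoeff
      · rw [Polynomial.coeff_natDegree] at hcoeff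
        exact (mul_eq_zero.mp hcoeff).resolve_right (Polynomial.leadingCoeff_ne_zero.mpr (h0 i0))
      · rw [Polynomial.coeff_eq_zero_of_natDegree_lt, mul_zero]
        exact lt_of_le_of_ne (hmax j hj) (fun h => hne (hd h))
    rcases eq_or_ne i i0 with rfl | hne
    · exact hc0
    · have hsum' : ∑ j ∈ s.erase i0, c j • f j = 0 := by
        rw [Finset.sum_erase_eq_sub hi0, hsum, hc0, zero_smul, sub_zero]
      exact ih (s.erase i0) (Finset.erase_ssubset hi0) c hsum' i (Finset.mem_erase.mpr ⟨hne, hi⟩)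

def εv : Fin 3 → Polynomial ℂ := ![Polynomial.X, 1, -Polynomial.X - 1]

lemma eps2 : aeval εv φ2 = Polynomial.C 2 * Polynomial.X ^ 2 + Polynomial.C 2 * Polynomial.X
    + Polynomial.C 2 := by
  simp only [φ2, pw, map_sub, map_add, map_mul, map_pow, aeval_X, aeval_C, εv,
    Matrix.cons_val_zero, Matrix.cons_val_one, Matrix.head_cons, Matrix.cons_val_two,
    Matrix.tail_cons]
  apply Polynomial.funext
  intro x
  simp
  ring

lemma eps3 : aeval εv φ3 = Polynomial.C (-3) * Polynomial.X ^ 2 + Polynomial.C (-3) * Polynomial.X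
    + Polynomial.C 0 := by
  simp only [φ3, pw, map_sub, map_add, map_mul, map_pow, aeval_X, aeval_C, εv,
    Matrix.cons_val_zero, Matrix.cons_val_one, Matrix.head_cons, Matrix.cons_val_two,
    Matrix.tail_cons]
  apply Polynomial.funext
  intro x
  simp
  ring

lemma u_deg : (Polynomial.C (2:ℂ) * Polynomial.X ^ 2 + Polynomial.C 2 * Polynomial.X
    + Polynomial.C 2).natDegree = 2 := Polynomial.natDegree_quadratic two_ne_zero

lemma v_deg : (Polynomial.C (-3:ℂ) * Polynomial.X ^ 2 + Polynomial.C (-3) * Polynomial.X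
    + Polynomial.C 0).natDegree = 2 := Polynomial.natDegree_quadratic (by norm_num)

lemma u_ne : (Polynomial.C (2:ℂ) * Polynomial.X ^ 2 + Polynomial.C 2 * Polynomial.X
    + Polynomial.C 2) ≠ 0 := by
  intro h; have h' := u_deg; rw [h] at h'; simp at h'

lemma v_ne : (Polynomial.C (-3:ℂ) * Polynomial.X ^ 2 + Polynomial.C (-3) * Polynomial.X
    + Polynomial.C 0) ≠ 0 := by
  intro h; have h' := v_deg; rw [h] at h'; simp at h'

lemma li_k (k : ℕ) : LinearIndependent ℂ
    (fun q : {q : ℕ × ℕ // 2 * q.1 + 3 * q.2 = k} => φ2 ^ q.1.1 * φ3 ^ q.1.2) := by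
  apply LinearIndependent.of_comp (aeval εv).toLinearMap
  have hcomp : ((aeval εv).toLinearMap ∘ fun q : {q : ℕ × ℕ // 2 * q.1 + 3 * q.2 = k} =>
      φ2 ^ q.1.1 * φ3 ^ q.1.2) = fun q : {q : ℕ × ℕ // 2 * q.1 + 3 * q.2 = k} =>
      (Polynomial.C 2 * Polynomial.X ^ 2 + Polynomial.C 2 * Polynomial.X
        + Polynomial.C 2) ^ q.1.1 *
      (Polynomial.C (-3) * Polynomial.X ^ 2 + Polynomial.C (-3) * Polynomial.X
        + Polynomial.C 0) ^ q.1.2 := by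
    funext q
    simp only [Function.comp_apply, AlgHom.toLinearMap_apply, map_mul, map_pow, eps2, eps3]
  rw [hcomp]
  apply li_poly
  · intro q
    exact mul_ne_zero (pow_ne_zero _ u_ne) (pow_ne_zero _ v_ne)
  · intro q q' h
    simp only [Polynomial.natDegree_mul (pow_ne_zero _ u_ne) (pow_ne_zero _ v_ne),
      Polynomial.natDegree_pow, u_deg, v_deg] at h
    have h1 := q.2
    have h2 := q'.2
    have : q.1 = q'.1 := by
      have := q.1
      ext
      · omega
      · omega
    exact Subtype.ext this


/-- `L(φ₂) = 0` and `L(φ₃) = 0`; moreover, for each `k`, the kernel of `L` on the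
homogeneous symmetric polynomials of degree `k` has a basis given by the monomials
`φ₂^a φ₃^b` indexed by the nonnegative integer solutions of `2a + 3b = k` — in
particular its dimension is the number of such solutions. -/
theorem stmt18 (K : ℕ → Submodule ℂ (MvPolynomial (Fin 3) ℂ))
    (hK : ∀ (k : ℕ) (p : MvPolynomial (Fin 3) ℂ),
      p ∈ K k ↔ (p.IsSymmetric ∧ p.IsHomogeneous k ∧ Lop p = 0)) :
    Lop φ2 = 0 ∧ Lop φ3 = 0 ∧
      ∀ k : ℕ, ∃ b : Module.Basis {q : ℕ × ℕ // 2 * q.1 + 3 * q.2 = k} ℂ (K k),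
        ∀ q, (b q : MvPolynomial (Fin 3) ℂ) = φ2 ^ q.1.1 * φ3 ^ q.1.2 := by
  refine ⟨Lop_phi2, Lop_phi3, fun k => ?_⟩
  have hmem : ∀ q : {q : ℕ × ℕ // 2 * q.1 + 3 * q.2 = k}, φ2 ^ q.1.1 * φ3 ^ q.1.2 ∈ K k := by
    intro q
    rw [hK]
    refine ⟨prod_symm _ _, ?_, prod_Lop _ _⟩
    have hq := prod_hom q.1.1 q.1.2
    rwa [q.2] at hq
  set v : {q : ℕ × ℕ // 2 * q.1 + 3 * q.2 = k} → K k :=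
    fun q => ⟨φ2 ^ q.1.1 * φ3 ^ q.1.2, hmem q⟩ with hv
  have hli : LinearIndependent ℂ v := by
    apply LinearIndependent.of_comp (K k).subtype
    exact li_k k
  have hsp : ⊤ ≤ Submodule.span ℂ (Set.range v) := by
    intro x _
    have hx := (hK k x).mp x.2
    have hmain := mem_span_k k x hx.1 hx.2.1 hx.2.2
    have himg : Set.range (fun q : {q : ℕ × ℕ // 2 * q.1 + 3 * q.2 = k} =>
        φ2 ^ q.1.1 * φ3 ^ q.1.2) = (K k).subtype '' Set.range v := by
      rw [← Set.range_comp]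
      rfl
    rw [himg, ← Submodule.map_span] at hmain
    obtain ⟨y, hy, hyx⟩ := Submodule.mem_map.mp hmain
    have hxy : y = x := Subtype.ext hyx
    exact hxy ▸ hy
  refine ⟨Module.Basis.mk hli hsp, fun q => ?_⟩
  rw [Module.Basis.mk_apply]
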